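/- Let α, β be nonzero real numbers and define f₂(θ) = α cos³θ + β sin²θ. Then every zero of f₂ is simple: if f₂(θ) = 0 then f₂'(θ) ≠ 0. -/

import Mathlib

theorem simple_zeros_f2 (α β : ℝ) (hα : α ≠ 0) (hβ : β ≠ 0) (θ : ℝ)
    (h : α * Real.cos θ ^ 3 + β * Real.sin θ ^ 2 = 0) :
    deriv (fun θ : ℝ => α * Real.cos θ ^ 3 + β * Real.sin θ ^ 2) θ ≠ 0 := by
  set s := Real.sin θ with hs
  set c := Real.cos θ with hc
  have hD : HasDerivAt (fun x : ℝ => α * Real.cos x ^ 3 + β * Real.sin x ^ 2)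
      (α * (3 * c ^ 2 * (-s)) + β * (2 * s * c)) θ := by
    have h1 := ((Real.hasDerivAt_cos θ).pow 3).const_mul α
    have h2 := ((Real.hasDerivAt_sin θ).pow 2).const_mul β
    convert h1.add h2 using 1
    · rfl
    · rfl
    · funext x; simp
    simp [hs, hc]
  rw [hD.deriv]
  intro h0
  have hpyth : s ^ 2 + c ^ 2 = 1 := Real.sin_sq_add_cos_sq θ
  -- factor: s * c * (2β - 3α c) = 0
  have hfac : s * (c * (2 * β - 3 * α * c)) = 0 := by linarith [h0]; 
  rcases mul_eq_zero.1 hfac with h1 | h1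
  · -- s = 0, so c^2 = 1
    have hc2 : c ^ 2 = 1 := by nlinarith
    have : α * c ^ 3 = 0 := by rw [h1] at h; simpa using h
    have : α * c ^ 3 ≠ 0 := by
      intro hz
      rcases mul_eq_zero.1 hz with h2 | h2
      · exact hα h2
      · have : c = 0 := by exact pow_eq_zero_iff (by norm_num) |>.1 h2
        rw [this] at hc2; norm_num at hc2
    exact this ‹α * c ^ 3 = 0›
  · rcases mul_eq_zero.1 h1 with h2 | h2
    · -- c = 0
      have : s ^ 2 = 1 := by nlinarith
      apply hβ
      nlinarith
    · -- 2β = 3α c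
      have hcne : c ≠ 0 := by
        intro hz
        apply hβ; nlinarith
      have hc2 : c ^ 2 ≤ 1 := by nlinarith
      have key : α * c * (3 - c ^ 2) = 0 := by linear_combination 2*h - s^2*h2 - 3*α*c*hpyth
      rcases mul_eq_zero.1 key with h3 | h3
      · rcases mul_eq_zero.1 h3 with h4 | h4
        · exact hα h4
        · exact hcne h4
      · nlinarith
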